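/- arXiv:2010.15027 — 2 statements merged into one kernel-verified Lean document; each statement's English description precedes it below -/
import Mathlib

section
/- Let A and B be n×n Hermitian matrices with B positive definite. Then there exists an invertible matrix E and a real diagonal matrix Λ such that A·E = B·E·Λ. -/
open Matrix
open scoped ComplexOrder

/-- Simultaneous diagonalization of a symmetric generalized eigenvalue problem:
for Hermitian `A` and positive definite `B`, there exist an invertible `E` and a
real diagonal `Λ` with `A * E = B * E * Λ`. -/
theorem symmetric_gep_diagonalization (n : ℕ)
    (A B : Matrix (Fin n) (Fin n) ℂ)
    (hA : A.IsHermitian) (hB : B.PosDef) :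
    ∃ E Λ : Matrix (Fin n) (Fin n) ℂ,
      IsUnit E ∧ Λ.IsDiag ∧ (∀ i, (Λ i i).im = 0) ∧ A * E = B * E * Λ := by
  open MatrixOrder in set S := CFC.sqrt B with hSdef
  have hSS : S * S = B := by open MatrixOrder in exact CFC.sqrt_mul_sqrt_self B hB.posSemidef.nonneg
  have hSherm : S.IsHermitian := by open MatrixOrder in exact (CFC.sqrt_nonneg B).posSemidef.1
  have hSdet : IsUnit S.det := by
    have : S.det * S.det = B.det := by rw [← det_mul, hSS]
    have hBdet : B.det ≠ 0 := by
      have := hB.det_pos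
      positivity
    refine isUnit_iff_ne_zero.mpr fun h => hBdet ?_
    rw [← this, h, mul_zero]
  have hSu : IsUnit S := (isUnit_iff_isUnit_det S).mpr hSdet
  have hSinv : S * S⁻¹ = 1 := mul_nonsing_inv S hSdet
  have hSinv' : S⁻¹ * S = 1 := nonsing_inv_mul S hSdet
  set C := S⁻¹ * A * S⁻¹ with hCdef
  have hSinvHerm : (S⁻¹).IsHermitian := hSherm.inv
  have hC : C.IsHermitian := by
    unfold Matrix.IsHermitian
    rw [hCdef, conjTranspose_mul, conjTranspose_mul, hSinvHerm, hA, mul_assoc]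
  set U : Matrix (Fin n) (Fin n) ℂ := (hC.eigenvectorUnitary : Matrix (Fin n) (Fin n) ℂ) with hUdef
  set Λ : Matrix (Fin n) (Fin n) ℂ := diagonal (Complex.ofReal ∘ hC.eigenvalues) with hΛdef
  have hspec : C = U * Λ * star U := hC.spectral_theorem
  have hUst : star U * U = 1 := (Matrix.mem_unitaryGroup_iff').mp (hC.eigenvectorUnitary).2
  have hUu : IsUnit U := ⟨⟨U, star U, (Matrix.mem_unitaryGroup_iff).mp (hC.eigenvectorUnitary).2, hUst⟩, rfl⟩
  refine ⟨S⁻¹ * U, Λ, ?_, isDiag_diagonal _, ?_, ?_⟩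
  · exact ((isUnit_nonsing_inv_iff).mpr hSu).mul hUu
  · intro i
    simp [hΛdef, diagonal_apply_eq]
  · have hA' : A = S * C * S := by
      rw [hCdef, show S * (S⁻¹ * A * S⁻¹) * S = (S * S⁻¹) * A * (S⁻¹ * S) by noncomm_ring [mul_assoc], hSinv, hSinv',
        one_mul, mul_one]
    calc A * (S⁻¹ * U) = S * (C * (S * S⁻¹) * U) := by rw [hA']; noncomm_ring [mul_assoc]
      _ = S * (U * Λ * (star U * U)) := by rw [hSinv, hspec]; noncomm_ring [mul_assoc]
      _ = S * U * Λ := by rw [hUst]; noncomm_ring [mul_assoc]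
      _ = B * (S⁻¹ * U) * Λ := by rw [← hSS, show S * S * (S⁻¹ * U) = S * (S * S⁻¹) * U by noncomm_ring [mul_assoc], hSinv]; noncomm_ring [mul_assoc]
end

section
/- Let M be a block matrix whose rows include (as a submatrix) M' = (I₀ᵀ F ⊗ I) N, where F is a p×p unitary, I₀ is the p×(p−1) matrix formed by the last p−1 columns of the identity, and N is any np×np matrix. Suppose F maps |0⟩ to the uniform superposition |e⟩ = (1/√p)(1,…,1)ᵀ. If N has a right singular vector of the form |0⟩⊗|x⟩ with singular value ‖N‖ and left singular vector |0⟩⊗|y⟩, then ‖M'‖ ≥ √((p−1)/p)·‖N‖. -/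
open Matrix
open scoped Kronecker

/-- The ℓ²-operator (spectral) norm of a matrix. -/
noncomputable def opNorm {m n : Type*} [Fintype m] [Fintype n] [DecidableEq n]
    (M : Matrix m n ℂ) : ℝ :=
  ‖LinearMap.toContinuousLinearMap (Matrix.toEuclideanLin M)‖

/-- Lower bound on the norm of the submatrix `M' = (I₀ᵀ F ⊗ I) N`: if `F` is a `p × p`
unitary mapping `|0⟩` to the uniform superposition, `I₀ᵀ` deletes the first coordinate,
and `N` attains its norm on a right singular vector of the form `|0⟩ ⊗ x` with left
singular vector `|0⟩ ⊗ y`, then `‖M'‖ ≥ √((p-1)/p) ‖N‖`. -/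
theorem submatrix_norm_lower_bound (p n : ℕ) (hp : 2 ≤ p)
    (F : Matrix (Fin p) (Fin p) ℂ) (hF : F ∈ Matrix.unitaryGroup (Fin p) ℂ)
    (hF0 : F.mulVec (Pi.single (⟨0, by omega⟩ : Fin p) 1)
      = fun _ => ((1 / Real.sqrt p : ℝ) : ℂ))
    (N : Matrix ((Fin p) × (Fin n)) ((Fin p) × (Fin n)) ℂ)
    (x y : EuclideanSpace ℂ (Fin n)) (hx : ‖x‖ = 1) (hy : ‖y‖ = 1)
    (hsing : N.mulVec (fun q => if (q.1 : ℕ) = 0 then x q.2 else 0)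
      = fun q => if (q.1 : ℕ) = 0 then ((opNorm N : ℝ) : ℂ) * y q.2 else 0) :
    Real.sqrt (((p : ℝ) - 1) / p) * opNorm N ≤
      opNorm
        ((((Matrix.of fun (i : Fin (p - 1)) (j : Fin p) =>
            if (j : ℕ) = (i : ℕ) + 1 then (1 : ℂ) else 0) * F) ⊗ₖ
          (1 : Matrix (Fin n) (Fin n) ℂ)) * N) := by
  classical
  set A : Matrix (Fin (p-1)) (Fin p) ℂ :=
    Matrix.of fun (i : Fin (p - 1)) (j : Fin p) =>
      if (j : ℕ) = (i : ℕ) + 1 then (1 : ℂ) else 0 with hA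
  set M' : Matrix ((Fin (p-1)) × (Fin n)) ((Fin p) × (Fin n)) ℂ :=
    (A * F) ⊗ₖ (1 : Matrix (Fin n) (Fin n) ℂ) * N with hM'
  set c : ℝ := opNorm N with hc
  have hc0 : 0 ≤ c := norm_nonneg _
  have hp0 : (0:ℝ) < p := by positivity
  have hnn : (0:ℝ) ≤ ((p:ℝ)-1)/p := by
    have h2 : (2:ℝ) ≤ p := by exact_mod_cast hp
    have : (0:ℝ) ≤ (p:ℝ)-1 := by linarith
    positivity
  have hsp : (0:ℝ) < Real.sqrt p := Real.sqrt_pos.mpr hp0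
  -- column 0 of F is constant 1/√p
  have hcol : ∀ j : Fin p, F j ⟨0, by omega⟩ = ((1 / Real.sqrt p : ℝ) : ℂ) := by
    intro j
    have := congrFun hF0 j
    simpa [Matrix.mulVec_single] using this
  -- the test vector
  set v : EuclideanSpace ℂ ((Fin p) × (Fin n)) :=
    (WithLp.equiv 2 _).symm (fun q => if (q.1 : ℕ) = 0 then x q.2 else 0) with hv
  have hvnorm : ‖v‖ = 1 := by
    rw [EuclideanSpace.norm_eq]
    rw [EuclideanSpace.norm_eq] at hx
    rw [show ∑ q : (Fin p) × (Fin n), ‖v q‖^2 = ∑ k, ‖x k‖^2 by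
      rw [Fintype.sum_prod_type]
      rw [Finset.sum_eq_single (⟨0, by omega⟩ : Fin p)]
      · simp [hv]
      · intro b _ hb
        have : (b : ℕ) ≠ 0 := fun h => hb (by ext; simpa using h)
        simp [hv, this]
      · simp]
    exact hx
  -- compute M' applied to v
  have hMv : M'.mulVec (WithLp.equiv 2 _ v)
      = fun q => ((c / Real.sqrt p : ℝ) : ℂ) * y q.2 := by
    rw [hM', ← Matrix.mulVec_mulVec]
    have : (WithLp.equiv 2 _) v = (fun q => if (q.1 : ℕ) = 0 then x q.2 else 0) := rfl
    rw [this, hsing]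
    funext q
    obtain ⟨i, k⟩ := q
    simp only [Matrix.mulVec, dotProduct, Matrix.kroneckerMap_apply]
    rw [Fintype.sum_prod_type]
    rw [Finset.sum_eq_single (⟨0, by omega⟩ : Fin p)]
    · rw [Finset.sum_eq_single k]
      · simp only [Matrix.one_apply_eq, mul_one, if_pos rfl]
        have hA0 : (A * F) i ⟨0, by omega⟩ = ((1 / Real.sqrt p : ℝ) : ℂ) := by
          rw [Matrix.mul_apply]
          rw [Finset.sum_eq_single (⟨(i:ℕ)+1, by omega⟩ : Fin p)]
          · simp [hA, hcol]
          · intro b _ hb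
            have : (b : ℕ) ≠ (i:ℕ)+1 := fun h => hb (by ext; simpa using h)
            simp [hA, this]
          · simp
        rw [hA0]
        push_cast
        field_simp
      · intro b _ hb
        simp [Matrix.one_apply, Ne.symm hb]
      · simp
    · intro b _ hb
      have : (b : ℕ) ≠ 0 := fun h => hb (by ext; simpa using h)
      simp [this]
    · simp
  -- norm of M' v
  have hynorm : ∑ k, ‖y k‖^2 = 1 := by
    have := hy
    rw [EuclideanSpace.norm_eq, Real.sqrt_eq_one] at this
    exact this
  have key : ‖(LinearMap.toContinuousLinearMap (Matrix.toEuclideanLin M')) v‖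
      = Real.sqrt (((p:ℝ) - 1) / p) * c := by
    have : (LinearMap.toContinuousLinearMap (Matrix.toEuclideanLin M')) v
        = (WithLp.equiv 2 _).symm (fun q => ((c / Real.sqrt p : ℝ) : ℂ) * y q.2) := by
      apply (WithLp.equiv 2 _).injective
      simpa [Matrix.toEuclideanLin_apply] using hMv
    rw [this, EuclideanSpace.norm_eq]
    have hsum : ∑ q : (Fin (p-1)) × (Fin n),
        ‖((c / Real.sqrt p : ℝ) : ℂ) * y q.2‖^2
        = (((p:ℝ) - 1) / p) * c^2 := by
      rw [Fintype.sum_prod_type]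
      simp only [norm_mul, Complex.norm_real, Real.norm_eq_abs, mul_pow, sq_abs,
        ← Finset.mul_sum, hynorm, mul_one, Finset.sum_const, Finset.card_univ,
        Fintype.card_fin, nsmul_eq_mul]
      rw [div_pow, Real.sq_sqrt hp0.le]
      rw [show (((p-1:ℕ):ℝ)) = (p:ℝ) - 1 by
        rw [Nat.cast_sub (by omega)]; norm_num]
      ring
    simp only [WithLp.equiv_symm_apply, WithLp.ofLp_toLp]
    rw [hsum, Real.sqrt_mul hnn (c^2), Real.sqrt_sq hc0]
  have hle := (LinearMap.toContinuousLinearMap (Matrix.toEuclideanLin M')).le_opNorm v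
  rw [key, hvnorm, mul_one] at hle
  exact hle
end
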